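/- For 0 < α < 8, the identity 2∫₀^{(2+α−2√(α+1))/4} dt/√(t(1−t)((α−4t)²−16t)) = ∫₀¹ ds/√(s(1−s)(α²s²+α(4−α)s+4)) holds. Note for 0 < α < 8 one needs α+1>0 which holds, and the integrands are positive on the open intervals of integration. -/

import Mathlib

open Real intervalIntegral MeasureTheory Set

set_option maxHeartbeats 4000000 in
/-- For `0 < α < 8`,
`2∫₀^{(2+α−2√(α+1))/4} dt/√(t(1−t)((α−4t)²−16t)) = ∫₀¹ ds/√(s(1−s)(α²s²+α(4−α)s+4))`. -/
theorem period_identity_0_lt_alpha_lt_8 (α : ℝ) (h0 : 0 < α) (h8 : α < 8) :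
    2 * ∫ t in (0 : ℝ)..((2 + α - 2 * Real.sqrt (α + 1)) / 4),
        1 / Real.sqrt (t * (1 - t) * ((α - 4 * t) ^ 2 - 16 * t)) =
      ∫ s in (0 : ℝ)..1,
        1 / Real.sqrt (s * (1 - s) * (α ^ 2 * s ^ 2 + α * (4 - α) * s + 4)) := by
  have hq0 : 0 < Real.sqrt (α + 1) := Real.sqrt_pos.2 (by linarith)
  have hq2 : Real.sqrt (α + 1) ^ 2 = α + 1 := Real.sq_sqrt (by linarith)
  set q : ℝ := Real.sqrt (α + 1) with hqdef
  have hq1 : 1 < q := by nlinarith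
  have hq3 : q < 3 := by nlinarith
  set b : ℝ := (2 + α - 2 * q) / 4 with hbdef
  have hbq : b = (q - 1) ^ 2 / 4 := by rw [hbdef]; linear_combination (-(1:ℝ)/4) * hq2
  have hb0 : 0 < b := by rw [hbq]; nlinarith
  have hb1 : b < 1 := by rw [hbq]; nlinarith
  set sst : ℝ := (q - 1) / α with hsstdef
  have hsst0 : 0 < sst := div_pos (by linarith) h0
  have hsst1 : sst < 1 := by rw [hsstdef, div_lt_one h0]; nlinarith
  set ψ : ℝ → ℝ := fun s => α ^ 2 * (s * (1 - s)) / (4 * (α * s + 1)) with hψdef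
  set dψ : ℝ → ℝ := fun s => α ^ 2 * (1 - 2 * s - α * s ^ 2) / (4 * (α * s + 1) ^ 2)
    with hdψdef
  have hαs : ∀ s : ℝ, 0 ≤ s → 0 < α * s + 1 := fun s hs => by nlinarith
  have hder : ∀ s : ℝ, 0 ≤ s → HasDerivAt ψ (dψ s) s := by
    intro s hs
    have h4 : (4:ℝ) * (α * s + 1) ≠ 0 := by have := hαs s hs; positivity
    have hu : HasDerivAt (fun s : ℝ => α ^ 2 * (s * (1 - s))) (α ^ 2 * (1 - 2 * s)) s := by
      have := ((hasDerivAt_id s).mul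
        ((hasDerivAt_const s (1:ℝ)).sub (hasDerivAt_id s))).const_mul (α ^ 2)
      refine this.congr_deriv ?_
      simp only [id_eq, Pi.sub_apply]; ring
    have hw : HasDerivAt (fun s : ℝ => 4 * (α * s + 1)) (4 * α) s := by
      have := (((hasDerivAt_id s).const_mul α).add_const (1:ℝ)).const_mul (4:ℝ)
      refine this.congr_deriv ?_
      ring
    have := hu.div hw h4
    refine this.congr_deriv ?_
    rw [hdψdef]
    field_simp
    ring
  have hcont : ContinuousOn ψ (Icc 0 1) := fun s hs =>
    ((hder s hs.1).continuousAt).continuousWithinAt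
  have hψ0 : ψ 0 = 0 := by simp [hψdef]
  have hψ1 : ψ 1 = 0 := by simp [hψdef]
  have hαsst : α * sst = q - 1 := by rw [hsstdef]; field_simp
  have hψsst : ψ sst = b := by
    rw [hbq, hψdef]
    show α ^ 2 * (sst * (1 - sst)) / (4 * (α * sst + 1)) = (q - 1) ^ 2 / 4
    have h1 : α * sst + 1 = q := by rw [hαsst]; ring
    have h2 : α ^ 2 * (sst * (1 - sst)) = (q - 1) * (α - (q - 1)) := by
      have : α ^ 2 * (sst * (1 - sst)) = (α * sst) * (α - α * sst) := by ring
      rw [this, hαsst]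
    have h3 : α - (q - 1) = q * (q - 1) := by linear_combination -hq2
    rw [h1, h2, h3]
    have hqne : q ≠ 0 := ne_of_gt hq0
    field_simp
  have hnst : α * sst ^ 2 + 2 * sst - 1 = 0 := by
    have : α * sst ^ 2 + 2 * sst - 1 = sst * (α * sst) + 2 * sst - 1 := by ring
    rw [this, hαsst, hsstdef]
    field_simp
    linear_combination hq2
  have hdpos : ∀ s ∈ Ioo (0:ℝ) sst, 0 < dψ s := by
    intro s hs
    have h1 : 0 < α * s + 1 := hαs s hs.1.le
    have hprod : 0 < (sst - s) * (α * (sst + s) + 2) := by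
      apply mul_pos (by linarith [hs.2])
      nlinarith [hs.1, hsst0]
    have h2 : 0 < 1 - 2 * s - α * s ^ 2 := by nlinarith [hnst, hprod]
    rw [hdψdef]
    exact div_pos (by positivity) (by positivity)
  have hdneg : ∀ s ∈ Ioo sst (1:ℝ), dψ s < 0 := by
    intro s hs
    have h1 : 0 < α * s + 1 := hαs s (le_trans hsst0.le hs.1.le)
    have hprod : 0 < (s - sst) * (α * (sst + s) + 2) := by
      apply mul_pos (by linarith [hs.1])
      nlinarith [hs.1, hsst0]
    have h2 : 1 - 2 * s - α * s ^ 2 < 0 := by nlinarith [hnst, hprod]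
    rw [hdψdef]
    apply div_neg_of_neg_of_pos _ (by positivity)
    nlinarith [mul_pos (pow_pos h0 2) (neg_pos.2 h2)]
  have hmono : StrictMonoOn ψ (Icc 0 sst) := by
    apply strictMonoOn_of_deriv_pos (convex_Icc _ _)
      (hcont.mono (Icc_subset_Icc le_rfl hsst1.le))
    intro x hx
    rw [interior_Icc] at hx
    rw [(hder x hx.1.le).deriv]
    exact hdpos x hx
  have hanti : StrictAntiOn ψ (Icc sst 1) := by
    apply strictAntiOn_of_deriv_neg (convex_Icc _ _)
      (hcont.mono (Icc_subset_Icc hsst0.le le_rfl))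
    intro x hx
    rw [interior_Icc] at hx
    rw [(hder x (le_trans hsst0.le hx.1.le)).deriv]
    exact hdneg x hx
  have hψpos : ∀ s ∈ Ioo (0:ℝ) 1, 0 < ψ s := by
    intro s hs
    have h1 := hαs s hs.1.le
    have h2 : 0 < s * (1 - s) := mul_pos hs.1 (by linarith [hs.2])
    rw [hψdef]
    exact div_pos (by positivity) (by positivity)
  have himg1 : ψ '' Ioo 0 sst = Ioo 0 b := by
    apply Subset.antisymm
    · rintro _ ⟨s, hs, rfl⟩
      constructor
      · exact hψpos s ⟨hs.1, hs.2.trans hsst1⟩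
      · have := hmono ⟨hs.1.le, hs.2.le⟩ ⟨hsst0.le, le_rfl⟩ hs.2
        rwa [hψsst] at this
    · have h := intermediate_value_Ioo hsst0.le (hcont.mono (Icc_subset_Icc le_rfl hsst1.le))
      rwa [hψ0, hψsst] at h
  have himg2 : ψ '' Ioo sst 1 = Ioo 0 b := by
    apply Subset.antisymm
    · rintro _ ⟨s, hs, rfl⟩
      constructor
      · exact hψpos s ⟨hsst0.trans hs.1, hs.2⟩
      · have := hanti ⟨le_rfl, hsst1.le⟩ ⟨hs.1.le, hs.2.le⟩ hs.1
        rwa [hψsst] at this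
    · have h := intermediate_value_Ioo' hsst1.le (hcont.mono (Icc_subset_Icc hsst0.le le_rfl))
      rwa [hψ1, hψsst] at h
  set F : ℝ → ℝ := fun t => 1 / Real.sqrt (t * (1 - t) * ((α - 4 * t) ^ 2 - 16 * t)) with hF
  set G : ℝ → ℝ := fun s => 1 / Real.sqrt (s * (1 - s) * (α ^ 2 * s ^ 2 + α * (4 - α) * s + 4))
    with hG
  have hD : ∀ s : ℝ, α * (8 - α) / 4 ≤ α ^ 2 * s ^ 2 + α * (4 - α) * s + 4 := by
    intro s
    nlinarith [sq_nonneg (2 * α * s + 4 - α)]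
  have hδ : 0 < α * (8 - α) / 4 := by
    have h1 : 0 < 8 - α := by linarith
    positivity
  have hQpos : ∀ s ∈ Ioo (0:ℝ) 1,
      0 < s * (1 - s) * (α ^ 2 * s ^ 2 + α * (4 - α) * s + 4) := by
    intro s hs
    exact mul_pos (mul_pos hs.1 (by linarith [hs.2])) (lt_of_lt_of_le hδ (hD s))
  have hkey : ∀ s ∈ Ioo (0:ℝ) 1, dψ s ≠ 0 → |dψ s| * F (ψ s) = G s := by
    intro s hs hne
    have h1 : 0 < α * s + 1 := hαs s hs.1.le
    have hQ := hQpos s hs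
    have hPQ : ψ s * (1 - ψ s) * ((α - 4 * ψ s) ^ 2 - 16 * ψ s) =
        (dψ s) ^ 2 * (s * (1 - s) * (α ^ 2 * s ^ 2 + α * (4 - α) * s + 4)) := by
      rw [hψdef, hdψdef]
      simp only
      have hv : α * s + 1 ≠ 0 := ne_of_gt h1
      field_simp
      ring
    have hsq : Real.sqrt (ψ s * (1 - ψ s) * ((α - 4 * ψ s) ^ 2 - 16 * ψ s)) =
        |dψ s| * Real.sqrt (s * (1 - s) * (α ^ 2 * s ^ 2 + α * (4 - α) * s + 4)) := by
      rw [hPQ, ← sq_abs, Real.sqrt_mul (sq_nonneg _), Real.sqrt_sq (abs_nonneg _)]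
    have habs : (0:ℝ) < |dψ s| := abs_pos.2 hne
    have hsqrtQ : 0 < Real.sqrt (s * (1 - s) * (α ^ 2 * s ^ 2 + α * (4 - α) * s + 4)) :=
      Real.sqrt_pos.2 hQ
    rw [hF, hG]
    simp only
    rw [hsq, one_div, mul_inv, ← mul_assoc, mul_inv_cancel₀ habs.ne', one_mul, one_div]
  -- integrability of G on Ioo 0 1
  have hGmeas : AEStronglyMeasurable G (volume.restrict (Ioo (0:ℝ) 1)) := by
    apply Measurable.aestronglyMeasurable
    rw [hG]
    have hc : Continuous fun s : ℝ =>
        Real.sqrt (s * (1 - s) * (α ^ 2 * s ^ 2 + α * (4 - α) * s + 4)) :=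
      Real.continuous_sqrt.comp (by continuity)
    exact measurable_const.div hc.measurable
  set C : ℝ := (Real.sqrt (α * (8 - α) / 8))⁻¹ with hC
  have hδ8 : 0 < α * (8 - α) / 8 := by
    have h1 : 0 < 8 - α := by linarith
    positivity
  have hf1 : IntegrableOn (fun s : ℝ => (Real.sqrt s)⁻¹) (Ioo (0:ℝ) 1) := by
    have h := intervalIntegral.intervalIntegrable_rpow' (a := (0:ℝ)) (b := 1)
      (r := -(1/2)) (by norm_num)
    refine ((h.1.mono_set Ioo_subset_Ioc_self).congr_fun ?_ measurableSet_Ioo)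
    intro x hx
    show x ^ (-(1/2) : ℝ) = (Real.sqrt x)⁻¹
    rw [Real.rpow_neg hx.1.le, Real.sqrt_eq_rpow]
  have hf2 : IntegrableOn (fun s : ℝ => (Real.sqrt (1 - s))⁻¹) (Ioo (0:ℝ) 1) := by
    have h := intervalIntegral.intervalIntegrable_rpow' (a := (0:ℝ)) (b := 1)
      (r := -(1/2)) (by norm_num)
    have h2 := (h.comp_sub_left 1)
    simp only [sub_self, sub_zero] at h2
    refine ((h2.2.mono_set Ioo_subset_Ioc_self).congr_fun ?_ measurableSet_Ioo)
    intro x hx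
    show (1 - x) ^ (-(1/2) : ℝ) = (Real.sqrt (1 - x))⁻¹
    rw [Real.rpow_neg (by linarith [hx.2] : (0:ℝ) ≤ 1 - x), Real.sqrt_eq_rpow]
  have hMint : IntegrableOn
      (fun s : ℝ => C * (Real.sqrt s)⁻¹ + C * (Real.sqrt (1 - s))⁻¹) (Ioo (0:ℝ) 1) :=
    (hf1.const_mul C).add (hf2.const_mul C)
  have hGbound : ∀ s ∈ Ioo (0:ℝ) 1,
      ‖G s‖ ≤ C * (Real.sqrt s)⁻¹ + C * (Real.sqrt (1 - s))⁻¹ := by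
    intro s hs
    have hQ := hQpos s hs
    have hG0 : 0 ≤ G s := by rw [hG]; positivity
    rw [Real.norm_eq_abs, abs_of_nonneg hG0, hG]
    simp only
    rcases le_or_gt s (1/2) with hhalf | hhalf
    · have hle : s * (α * (8 - α) / 8) ≤
          s * (1 - s) * (α ^ 2 * s ^ 2 + α * (4 - α) * s + 4) := by
        have e1 : s * (α * (8 - α) / 8) = s * (1/2) * (α * (8 - α) / 4) := by ring
        rw [e1]
        apply mul_le_mul (by nlinarith [hs.1, hhalf]) (hD s) hδ.le
        nlinarith [hs.1, hs.2]
      have h3 : 0 < Real.sqrt (s * (α * (8 - α) / 8)) :=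
        Real.sqrt_pos.2 (mul_pos hs.1 hδ8)
      have h4 : 1 / Real.sqrt (s * (1 - s) * (α ^ 2 * s ^ 2 + α * (4 - α) * s + 4)) ≤
          1 / Real.sqrt (s * (α * (8 - α) / 8)) :=
        one_div_le_one_div_of_le h3 (Real.sqrt_le_sqrt hle)
      have h5 : 1 / Real.sqrt (s * (α * (8 - α) / 8)) = C * (Real.sqrt s)⁻¹ := by
        rw [Real.sqrt_mul hs.1.le, hC, one_div, mul_inv]
        ring
      have h6 : 0 ≤ C * (Real.sqrt (1 - s))⁻¹ := by
        rw [hC]; positivity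
      calc 1 / Real.sqrt (s * (1 - s) * (α ^ 2 * s ^ 2 + α * (4 - α) * s + 4)) ≤
            C * (Real.sqrt s)⁻¹ := by rw [← h5]; exact h4
        _ ≤ C * (Real.sqrt s)⁻¹ + C * (Real.sqrt (1 - s))⁻¹ := by linarith
    · have hle : (1 - s) * (α * (8 - α) / 8) ≤
          s * (1 - s) * (α ^ 2 * s ^ 2 + α * (4 - α) * s + 4) := by
        have e1 : (1 - s) * (α * (8 - α) / 8) = (1/2) * (1 - s) * (α * (8 - α) / 4) := by ring
        rw [e1]
        apply mul_le_mul (by nlinarith [hs.2, hhalf]) (hD s) hδ.le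
        nlinarith [hs.1, hs.2]
      have h3 : 0 < Real.sqrt ((1 - s) * (α * (8 - α) / 8)) :=
        Real.sqrt_pos.2 (by nlinarith [hs.2, hδ8])
      have h4 : 1 / Real.sqrt (s * (1 - s) * (α ^ 2 * s ^ 2 + α * (4 - α) * s + 4)) ≤
          1 / Real.sqrt ((1 - s) * (α * (8 - α) / 8)) :=
        one_div_le_one_div_of_le h3 (Real.sqrt_le_sqrt hle)
      have h5 : 1 / Real.sqrt ((1 - s) * (α * (8 - α) / 8)) = C * (Real.sqrt (1 - s))⁻¹ := by
        rw [Real.sqrt_mul (by linarith [hs.2] : (0:ℝ) ≤ 1 - s), hC, one_div, mul_inv]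
        ring
      have h6 : 0 ≤ C * (Real.sqrt s)⁻¹ := by
        rw [hC]; positivity
      calc 1 / Real.sqrt (s * (1 - s) * (α ^ 2 * s ^ 2 + α * (4 - α) * s + 4)) ≤
            C * (Real.sqrt (1 - s))⁻¹ := by rw [← h5]; exact h4
        _ ≤ C * (Real.sqrt s)⁻¹ + C * (Real.sqrt (1 - s))⁻¹ := by linarith
  have hGint : IntegrableOn G (Ioo (0:ℝ) 1) := by
    apply hMint.mono' hGmeas
    rw [ae_restrict_iff' measurableSet_Ioo]
    exact Filter.Eventually.of_forall hGbound
  -- change of variables on each half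
  have hEq1 : ∫ s in Ioo (0:ℝ) sst, G s = ∫ t in Ioo (0:ℝ) b, F t := by
    have hder' : ∀ x ∈ Ioo (0:ℝ) sst, HasDerivWithinAt ψ (dψ x) (Ioo 0 sst) x :=
      fun x hx => (hder x hx.1.le).hasDerivWithinAt
    have hinj : InjOn ψ (Ioo 0 sst) :=
      (hmono.injOn).mono Ioo_subset_Icc_self
    rw [← himg1, MeasureTheory.integral_image_eq_integral_abs_deriv_smul
      measurableSet_Ioo hder' hinj F]
    apply setIntegral_congr_fun measurableSet_Ioo
    intro s hs
    have := hkey s ⟨hs.1, hs.2.trans hsst1⟩ (ne_of_gt (hdpos s hs))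
    simpa [smul_eq_mul] using this.symm
  have hEq2 : ∫ s in Ioo sst (1:ℝ), G s = ∫ t in Ioo (0:ℝ) b, F t := by
    have hder' : ∀ x ∈ Ioo sst (1:ℝ), HasDerivWithinAt ψ (dψ x) (Ioo sst 1) x :=
      fun x hx => (hder x (hsst0.trans hx.1).le).hasDerivWithinAt
    have hinj : InjOn ψ (Ioo sst 1) :=
      (hanti.injOn).mono Ioo_subset_Icc_self
    rw [← himg2, MeasureTheory.integral_image_eq_integral_abs_deriv_smul
      measurableSet_Ioo hder' hinj F]
    apply setIntegral_congr_fun measurableSet_Ioo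
    intro s hs
    have := hkey s ⟨hsst0.trans hs.1, hs.2⟩ (ne_of_lt (hdneg s hs))
    simpa [smul_eq_mul] using this.symm
  -- assemble
  rw [intervalIntegral.integral_of_le hb0.le,
    intervalIntegral.integral_of_le (by norm_num : (0:ℝ) ≤ 1),
    MeasureTheory.integral_Ioc_eq_integral_Ioo, MeasureTheory.integral_Ioc_eq_integral_Ioo]
  rw [← Ioo_union_Ico_eq_Ioo hsst0 hsst1.le]
  rw [MeasureTheory.setIntegral_union ?disj measurableSet_Ico
    (hGint.mono_set (fun x hx => ⟨hx.1, hx.2.trans hsst1⟩))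
    (hGint.mono_set (fun x hx => ⟨hsst0.trans_le hx.1, hx.2⟩))]
  case disj =>
    rw [Set.disjoint_left]
    rintro x ⟨_, h2⟩ ⟨h3, _⟩
    exact absurd h2 (not_lt.2 h3)
  rw [MeasureTheory.integral_Ico_eq_integral_Ioo]
  rw [hEq1, hEq2]
  ring
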